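/- Let M̃ = (M, P_A) be a MAMDP with underlying MDP M. An action-value function Q: S×A → ℝ and a deterministic policy π satisfy the Bellman optimality objective Q(s,a) = R(s,a) + γ E_{s'~P(s,a)}[max_{a'} Q(s',a')] together with π(s) = argmax_a Q(s,a), if and only if Q is the optimal action-value function Q*_M of the underlying MDP M and π is an optimal policy for M. In particular the solution is independent of the action modification P_A. -/

import Mathlib

open scoped BigOperators

def IsDist {X : Type*} [Fintype X] (d : X → ℝ) : Prop :=
  (∀ x, 0 ≤ d x) ∧ ∑ x, d x = 1

def IsKernel {S A : Type*} [Fintype S] (P : S → A → S → ℝ) : Prop :=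
  ∀ s a, IsDist (P s a)

def IsStochPolicy {S A : Type*} [Fintype A] (π : S → A → ℝ) : Prop :=
  ∀ s, IsDist (π s)

/-- Distribution over states after `t` steps, starting from `init`, when the
executed-action distribution in state `s` is `sel s`. -/
noncomputable def stateDist {S A : Type*} [Fintype S] [Fintype A]
    (P : S → A → S → ℝ) (sel : S → A → ℝ) (init : S → ℝ) : ℕ → S → ℝ
  | 0 => init
  | t + 1 => fun s' => ∑ s, ∑ a, stateDist P sel init t s * sel s a * P s a s'

/-- Expected discounted return `E[∑ γ^t R(S_t, A_t)]` where `A_t ~ sel S_t`. -/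
noncomputable def expReturn {S A : Type*} [Fintype S] [Fintype A]
    (P : S → A → S → ℝ) (R : S → A → ℝ) (γ : ℝ) (sel : S → A → ℝ) (init : S → ℝ) : ℝ :=
  ∑' t : ℕ, γ ^ t * ∑ s, ∑ a, stateDist P sel init t s * sel s a * R s a

open Classical in
noncomputable def dirac {S : Type*} (s0 : S) : S → ℝ := fun s => if s = s0 then 1 else 0

section Dev
variable {S A : Type*} [Fintype S] [Fintype A]

lemma dirac_isDist (s0 : S) : IsDist (dirac s0) := by
  classical
  constructor
  · intro s; unfold dirac; split <;> norm_num
  · simp [dirac]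

lemma sum_dirac_mul (s0 : S) (f : S → ℝ) : ∑ s, dirac s0 s * f s = f s0 := by
  classical
  simp [dirac, Finset.sum_ite_eq']

lemma sum_mul_dirac (s0 : S) (f : S → ℝ) : ∑ s, f s * dirac s s0 = f s0 := by
  classical
  simp [dirac, Finset.sum_ite_eq']

variable (P : S → A → S → ℝ) (R : S → A → ℝ) (γ : ℝ)

noncomputable def stepD (sel : S → A → ℝ) (d : S → ℝ) : S → ℝ :=
  fun s' => ∑ s, ∑ a, d s * sel s a * P s a s'

noncomputable def rbar (sel : S → A → ℝ) (d : S → ℝ) : ℝ :=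
  ∑ s, ∑ a, d s * sel s a * R s a

lemma expReturn_eq (sel init) :
    expReturn P R γ sel init = ∑' t : ℕ, γ ^ t * rbar R sel (stateDist P sel init t) := rfl

lemma stateDist_succ (sel init) (t : ℕ) :
    stateDist P sel init (t+1) = stepD P sel (stateDist P sel init t) := rfl

lemma stateDist_shift (sel init) (t : ℕ) :
    stateDist P sel init (t+1) = stateDist P sel (stepD P sel init) t := by
  induction t with
  | zero => rfl
  | succ t ih =>
    rw [stateDist_succ, ih, ← stateDist_succ]

lemma stepD_isDist (hP : IsKernel P) {sel} (hsel : IsStochPolicy sel) {d} (hd : IsDist d) :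
    IsDist (stepD P sel d) := by
  constructor
  · intro s'
    refine Finset.sum_nonneg fun s _ => Finset.sum_nonneg fun a _ => ?_
    exact mul_nonneg (mul_nonneg (hd.1 s) ((hsel s).1 a)) ((hP s a).1 s')
  · unfold stepD
    rw [Finset.sum_comm]
    have h : ∀ s : S, ∑ s', ∑ a, d s * sel s a * P s a s' = d s := by
      intro s
      rw [Finset.sum_comm]
      have : ∀ a : A, ∑ s', d s * sel s a * P s a s' = d s * sel s a := by
        intro a
        rw [← Finset.mul_sum, (hP s a).2, mul_one]
      rw [Finset.sum_congr rfl fun a _ => this a, ← Finset.mul_sum, (hsel s).2, mul_one]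
    rw [Finset.sum_congr rfl fun s _ => h s, hd.2]

lemma stateDist_isDist (hP : IsKernel P) {sel} (hsel : IsStochPolicy sel) {init}
    (hinit : IsDist init) (t : ℕ) : IsDist (stateDist P sel init t) := by
  induction t with
  | zero => exact hinit
  | succ t ih => exact stepD_isDist P hP hsel ih

lemma rbar_abs_le {C : ℝ} (hC : ∀ s a, |R s a| ≤ C)
    {sel} (hsel : IsStochPolicy sel) {d} (hd : IsDist d) :
    |rbar R sel d| ≤ C := by
  unfold rbar
  have h1 : ∀ s : S, ∀ a : A, 0 ≤ d s * sel s a :=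
    fun s a => mul_nonneg (hd.1 s) ((hsel s).1 a)
  calc |∑ s, ∑ a, d s * sel s a * R s a| ≤ ∑ s, |∑ a, d s * sel s a * R s a| :=
        Finset.abs_sum_le_sum_abs _ _
    _ ≤ ∑ s, ∑ a, |d s * sel s a * R s a| :=
        Finset.sum_le_sum fun s _ => Finset.abs_sum_le_sum_abs _ _
    _ ≤ ∑ s, ∑ a, d s * sel s a * C := by
        refine Finset.sum_le_sum fun s _ => Finset.sum_le_sum fun a _ => ?_
        rw [abs_mul, abs_of_nonneg (h1 s a)]
        exact mul_le_mul_of_nonneg_left (hC s a) (h1 s a)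
    _ = C := by
        have h2 : ∀ s : S, ∑ a, d s * sel s a * C = d s * C := by
          intro s
          calc ∑ a, d s * sel s a * C = (∑ a, d s * sel s a) * C := by rw [Finset.sum_mul]
            _ = d s * C := by rw [← Finset.mul_sum, (hsel s).2, mul_one]
        rw [Finset.sum_congr rfl fun s _ => h2 s, ← Finset.sum_mul, hd.2, one_mul]

lemma exists_R_bound : ∃ C : ℝ, 0 ≤ C ∧ ∀ s a, |R s a| ≤ C := by
  obtain ⟨C, hC⟩ := Set.Finite.bddAbove (Set.finite_range fun p : S × A => |R p.1 p.2|)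
  exact ⟨max 0 C, le_max_left _ _,
    fun s a => le_trans (hC ⟨(s, a), rfl⟩) (le_max_right _ _)⟩

lemma summable_ret (hγ0 : 0 ≤ γ) (hγ1 : γ < 1) {C : ℝ}
    (f : ℕ → ℝ) (hf : ∀ t, |f t| ≤ C) :
    Summable (fun t => γ ^ t * f t) := by
  refine Summable.of_norm_bounded (g := fun t => C * γ ^ t)
    ((summable_geometric_of_lt_one hγ0 hγ1).mul_left C) fun t => ?_
  rw [Real.norm_eq_abs, abs_mul, abs_pow, abs_of_nonneg hγ0, mul_comm]
  exact mul_le_mul_of_nonneg_right (hf t) (pow_nonneg hγ0 t)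


lemma rbar_linear (sel : S → A → ℝ) (c : S → ℝ) (d0 : S → S → ℝ) :
    rbar R sel (fun s => ∑ s0, c s0 * d0 s0 s) = ∑ s0, c s0 * rbar R sel (d0 s0) := by
  unfold rbar
  calc ∑ s, ∑ a, (∑ s0, c s0 * d0 s0 s) * sel s a * R s a
      = ∑ s, ∑ a, ∑ s0, c s0 * (d0 s0 s * sel s a * R s a) := by
        refine Finset.sum_congr rfl fun s _ => Finset.sum_congr rfl fun a _ => ?_
        rw [Finset.sum_mul, Finset.sum_mul]
        exact Finset.sum_congr rfl fun s0 _ => by ring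
    _ = ∑ s, ∑ s0, ∑ a, c s0 * (d0 s0 s * sel s a * R s a) :=
        Finset.sum_congr rfl fun s _ => Finset.sum_comm
    _ = ∑ s0, ∑ s, ∑ a, c s0 * (d0 s0 s * sel s a * R s a) := Finset.sum_comm
    _ = ∑ s0, c s0 * ∑ s, ∑ a, d0 s0 s * sel s a * R s a := by
        refine Finset.sum_congr rfl fun s0 _ => ?_
        rw [Finset.mul_sum]
        exact Finset.sum_congr rfl fun s _ => by rw [Finset.mul_sum]

lemma stateDist_linear (sel : S → A → ℝ) (init : S → ℝ) (t : ℕ) :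
    stateDist P sel init t = fun s' => ∑ s0, init s0 * stateDist P sel (dirac s0) t s' := by
  induction t with
  | zero =>
    funext s'
    exact (sum_mul_dirac s' init).symm
  | succ t ih =>
    funext s'
    show ∑ s, ∑ a, stateDist P sel init t s * sel s a * P s a s'
      = ∑ s0, init s0 * stateDist P sel (dirac s0) (t + 1) s'
    simp only [ih]
    have h := rbar_linear (R := fun s a => P s a s') sel init
      (fun s0 => stateDist P sel (dirac s0) t)
    simp only [rbar] at h
    exact h

lemma expReturn_linear (hP : IsKernel P) (hγ0 : 0 ≤ γ) (hγ1 : γ < 1)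
    {sel} (hsel : IsStochPolicy sel) (init : S → ℝ) :
    expReturn P R γ sel init = ∑ s0, init s0 * expReturn P R γ sel (dirac s0) := by
  obtain ⟨C, hC0, hC⟩ := exists_R_bound R
  have hsum : ∀ s0 : S, Summable (fun t => γ ^ t * rbar R sel (stateDist P sel (dirac s0) t)) :=
    fun s0 => summable_ret γ hγ0 hγ1 _ fun t =>
      rbar_abs_le R hC hsel (stateDist_isDist P hP hsel (dirac_isDist s0) t)
  rw [expReturn_eq]
  calc ∑' t : ℕ, γ ^ t * rbar R sel (stateDist P sel init t)
      = ∑' t : ℕ, ∑ s0, init s0 * (γ ^ t * rbar R sel (stateDist P sel (dirac s0) t)) := by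
        refine tsum_congr fun t => ?_
        rw [stateDist_linear P sel init t, rbar_linear, Finset.mul_sum]
        exact Finset.sum_congr rfl fun s0 _ => by ring
    _ = ∑ s0, ∑' t : ℕ, init s0 * (γ ^ t * rbar R sel (stateDist P sel (dirac s0) t)) :=
        Summable.tsum_finsetSum fun s0 _ => (hsum s0).mul_left _
    _ = ∑ s0, init s0 * expReturn P R γ sel (dirac s0) :=
        Finset.sum_congr rfl fun s0 _ => tsum_mul_left

noncomputable def Vsel (sel : S → A → ℝ) : S → ℝ := fun s => expReturn P R γ sel (dirac s)

lemma rbar_dirac (sel : S → A → ℝ) (s0 : S) :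
    rbar R sel (dirac s0) = ∑ a, sel s0 a * R s0 a := by
  unfold rbar
  have h : ∀ s : S, ∑ a, dirac s0 s * sel s a * R s a = dirac s0 s * ∑ a, sel s a * R s a := by
    intro s; rw [Finset.mul_sum]; exact Finset.sum_congr rfl fun a _ => by ring
  rw [Finset.sum_congr rfl fun s _ => h s, sum_dirac_mul]

lemma stepD_dirac (sel : S → A → ℝ) (s0 : S) (s' : S) :
    stepD P sel (dirac s0) s' = ∑ a, sel s0 a * P s0 a s' := by
  unfold stepD
  have h : ∀ s : S, ∑ a, dirac s0 s * sel s a * P s a s' = dirac s0 s * ∑ a, sel s a * P s a s' := by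
    intro s; rw [Finset.mul_sum]; exact Finset.sum_congr rfl fun a _ => by ring
  rw [Finset.sum_congr rfl fun s _ => h s, sum_dirac_mul]

lemma Vsel_eq (hP : IsKernel P) (hγ0 : 0 ≤ γ) (hγ1 : γ < 1)
    {sel} (hsel : IsStochPolicy sel) (s : S) :
    Vsel P R γ sel s = ∑ a, sel s a * (R s a + γ * ∑ s', P s a s' * Vsel P R γ sel s') := by
  obtain ⟨C, hC0, hC⟩ := exists_R_bound R
  have hsummable : Summable (fun t => γ ^ t * rbar R sel (stateDist P sel (dirac s) t)) :=
    summable_ret γ hγ0 hγ1 _ fun t =>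
      rbar_abs_le R hC hsel (stateDist_isDist P hP hsel (dirac_isDist s) t)
  have h0 : Vsel P R γ sel s = rbar R sel (dirac s)
      + γ * expReturn P R γ sel (stepD P sel (dirac s)) := by
    rw [show Vsel P R γ sel s = ∑' t : ℕ, γ ^ t * rbar R sel (stateDist P sel (dirac s) t)
        from rfl,
      Summable.tsum_eq_zero_add hsummable, pow_zero, one_mul]
    congr 1
    rw [expReturn_eq, ← tsum_mul_left]
    refine tsum_congr fun t => ?_
    rw [stateDist_shift, pow_succ]
    ring
  rw [h0, expReturn_linear P R γ hP hγ0 hγ1 hsel, rbar_dirac]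
  have h1 : ∀ s0 : S, stepD P sel (dirac s) s0 * expReturn P R γ sel (dirac s0)
      = ∑ a, sel s a * (P s a s0 * Vsel P R γ sel s0) := by
    intro s0
    rw [stepD_dirac, Finset.sum_mul]
    exact Finset.sum_congr rfl fun a _ => by rw [Vsel]; ring
  rw [Finset.sum_congr rfl fun s0 _ => h1 s0]
  calc (∑ a, sel s a * R s a) + γ * ∑ s0, ∑ a, sel s a * (P s a s0 * Vsel P R γ sel s0)
      = (∑ a, sel s a * R s a) + ∑ a, sel s a * (γ * ∑ s0, P s a s0 * Vsel P R γ sel s0) := by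
        congr 1
        have h2 : ∀ s0 : S, γ * ∑ a, sel s a * (P s a s0 * Vsel P R γ sel s0)
            = ∑ a, γ * (sel s a * (P s a s0 * Vsel P R γ sel s0)) :=
          fun s0 => by rw [Finset.mul_sum]
        rw [Finset.mul_sum, Finset.sum_congr rfl fun s0 _ => h2 s0, Finset.sum_comm]
        refine Finset.sum_congr rfl fun a _ => ?_
        rw [Finset.mul_sum, Finset.mul_sum]
        exact Finset.sum_congr rfl fun s0 _ => by ring
    _ = ∑ a, sel s a * (R s a + γ * ∑ s', P s a s' * Vsel P R γ sel s') := by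
        rw [← Finset.sum_add_distrib]
        exact Finset.sum_congr rfl fun a _ => by ring


lemma abs_ciSup_sub [Nonempty A] (f g : A → ℝ) {D : ℝ} (h : ∀ a, |f a - g a| ≤ D) :
    |(⨆ a, f a) - ⨆ a, g a| ≤ D := by
  have hbf : BddAbove (Set.range f) := Set.Finite.bddAbove (Set.finite_range _)
  have hbg : BddAbove (Set.range g) := Set.Finite.bddAbove (Set.finite_range _)
  rw [abs_sub_le_iff]
  constructor
  · rw [sub_le_iff_le_add]
    refine ciSup_le fun a => ?_
    have h1 := abs_le.1 (h a)
    have h2 := le_ciSup hbg a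
    linarith [h1.2]
  · rw [sub_le_iff_le_add]
    refine ciSup_le fun a => ?_
    have h1 := abs_le.1 (h a)
    have h2 := le_ciSup hbf a
    linarith [h1.1]

lemma nonneg_of_le_gamma_mul {D : ℝ} (hγ0 : 0 ≤ γ) (hγ1 : γ < 1) (h : D ≤ γ * D) : D ≤ 0 := by
  by_contra hcon
  push_neg at hcon
  have : γ * D < 1 * D := mul_lt_mul_of_pos_right hγ1 hcon
  linarith

lemma bellman_unique [Nonempty A] (hγ0 : 0 ≤ γ) (hγ1 : γ < 1) (hP : IsKernel P)
    (Q1 Q2 : S → A → ℝ)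
    (h1 : ∀ s a, Q1 s a = R s a + γ * ∑ s', P s a s' * ⨆ a', Q1 s' a')
    (h2 : ∀ s a, Q2 s a = R s a + γ * ∑ s', P s a s' * ⨆ a', Q2 s' a') :
    Q1 = Q2 := by
  funext s a
  obtain ⟨p0, _, hp0⟩ := Finset.exists_max_image (Finset.univ : Finset (S × A))
    (fun p : S × A => |Q1 p.1 p.2 - Q2 p.1 p.2|) ⟨(s, a), Finset.mem_univ _⟩
  set M := |Q1 p0.1 p0.2 - Q2 p0.1 p0.2| with hM
  have hmax : ∀ (s' : S) (a' : A), |Q1 s' a' - Q2 s' a'| ≤ M :=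
    fun s' a' => hp0 (s', a') (Finset.mem_univ _)
  have hsupd : ∀ s' : S, |(⨆ a', Q1 s' a') - ⨆ a', Q2 s' a'| ≤ M :=
    fun s' => abs_ciSup_sub _ _ (hmax s')
  have key : M ≤ γ * M := by
    have e1 : Q1 p0.1 p0.2 - Q2 p0.1 p0.2
        = γ * ∑ s', P p0.1 p0.2 s' * ((⨆ a', Q1 s' a') - ⨆ a', Q2 s' a') := by
      rw [h1 p0.1 p0.2, h2 p0.1 p0.2]
      have hd : ∑ s', P p0.1 p0.2 s' * ((⨆ a', Q1 s' a') - ⨆ a', Q2 s' a')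
          = (∑ s', P p0.1 p0.2 s' * ⨆ a', Q1 s' a')
            - ∑ s', P p0.1 p0.2 s' * ⨆ a', Q2 s' a' := by
        rw [← Finset.sum_sub_distrib]
        exact Finset.sum_congr rfl fun s' _ => by ring
      rw [hd, mul_sub]
      ring
    have e2 : M = γ * |∑ s', P p0.1 p0.2 s' * ((⨆ a', Q1 s' a') - ⨆ a', Q2 s' a')| := by
      rw [hM, e1, abs_mul, abs_of_nonneg hγ0]
    refine le_trans (le_of_eq e2) (mul_le_mul_of_nonneg_left ?_ hγ0)
    calc |∑ s', P p0.1 p0.2 s' * ((⨆ a', Q1 s' a') - ⨆ a', Q2 s' a')|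
        ≤ ∑ s', |P p0.1 p0.2 s' * ((⨆ a', Q1 s' a') - ⨆ a', Q2 s' a')| :=
          Finset.abs_sum_le_sum_abs _ _
      _ ≤ ∑ s', P p0.1 p0.2 s' * M := by
          refine Finset.sum_le_sum fun s' _ => ?_
          rw [abs_mul, abs_of_nonneg ((hP p0.1 p0.2).1 s')]
          exact mul_le_mul_of_nonneg_left (hsupd s') ((hP p0.1 p0.2).1 s')
      _ = M := by rw [← Finset.sum_mul, (hP p0.1 p0.2).2, one_mul]
  have hM0 : M ≤ 0 := nonneg_of_le_gamma_mul γ hγ0 hγ1 key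
  have := hmax s a
  have habs := abs_nonneg (Q1 s a - Q2 s a)
  have : |Q1 s a - Q2 s a| = 0 := le_antisymm (le_trans this hM0) habs
  have := abs_eq_zero.1 this
  linarith

lemma Vsel_le_Vstar [Nonempty A] (hP : IsKernel P) (hγ0 : 0 ≤ γ) (hγ1 : γ < 1)
    (Qstar : S → A → ℝ)
    (hQstar : ∀ s a, Qstar s a = R s a + γ * ∑ s', P s a s' * ⨆ a', Qstar s' a')
    {sel} (hsel : IsStochPolicy sel) (s : S) :
    Vsel P R γ sel s ≤ ⨆ a, Qstar s a := by
  haveI : Nonempty S := ⟨s⟩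
  obtain ⟨s0, _, hs0⟩ := Finset.exists_max_image (Finset.univ : Finset S)
    (fun s => Vsel P R γ sel s - ⨆ a, Qstar s a) ⟨s, Finset.mem_univ s⟩
  have hmax : ∀ s' : S, Vsel P R γ sel s' - (⨆ a, Qstar s' a)
      ≤ Vsel P R γ sel s0 - ⨆ a, Qstar s0 a := fun s' => hs0 s' (Finset.mem_univ s')
  set D := Vsel P R γ sel s0 - ⨆ a, Qstar s0 a with hD
  have hbdd : ∀ s' : S, BddAbove (Set.range (Qstar s')) :=
    fun s' => Set.Finite.bddAbove (Set.finite_range _)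
  have h2 : Vsel P R γ sel s0 - (⨆ a, Qstar s0 a)
      = ∑ a, sel s0 a * ((R s0 a + γ * ∑ s', P s0 a s' * Vsel P R γ sel s')
          - ⨆ a', Qstar s0 a') := by
    rw [Vsel_eq P R γ hP hγ0 hγ1 hsel s0]
    rw [show ∑ a, sel s0 a * ((R s0 a + γ * ∑ s', P s0 a s' * Vsel P R γ sel s')
          - ⨆ a', Qstar s0 a')
        = (∑ a, sel s0 a * (R s0 a + γ * ∑ s', P s0 a s' * Vsel P R γ sel s'))
          - ∑ a, sel s0 a * ⨆ a', Qstar s0 a' by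
      rw [← Finset.sum_sub_distrib]
      exact Finset.sum_congr rfl fun a _ => by ring]
    rw [← Finset.sum_mul, (hsel s0).2, one_mul]
  have key : D ≤ γ * D := by
    refine le_trans (le_of_eq (hD.trans h2)) ?_
    calc ∑ a, sel s0 a * ((R s0 a + γ * ∑ s', P s0 a s' * Vsel P R γ sel s')
            - ⨆ a', Qstar s0 a')
        ≤ ∑ a, sel s0 a * (γ * D) := by
          refine Finset.sum_le_sum fun a _ => ?_
          refine mul_le_mul_of_nonneg_left ?_ ((hsel s0).1 a)
          have hq : Qstar s0 a ≤ ⨆ a', Qstar s0 a' := le_ciSup (hbdd s0) a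
          have hsum : ∑ s', P s0 a s' * Vsel P R γ sel s'
              - ∑ s', P s0 a s' * (⨆ a', Qstar s' a') ≤ D := by
            rw [← Finset.sum_sub_distrib]
            calc ∑ s', (P s0 a s' * Vsel P R γ sel s' - P s0 a s' * ⨆ a', Qstar s' a')
                = ∑ s', P s0 a s' * (Vsel P R γ sel s' - ⨆ a', Qstar s' a') :=
                  Finset.sum_congr rfl fun s' _ => by ring
              _ ≤ ∑ s', P s0 a s' * D := Finset.sum_le_sum fun s' _ =>
                  mul_le_mul_of_nonneg_left (hmax s') ((hP s0 a).1 s')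
              _ = D := by rw [← Finset.sum_mul, (hP s0 a).2, one_mul]
          have hstep : (R s0 a + γ * ∑ s', P s0 a s' * Vsel P R γ sel s') - Qstar s0 a
              ≤ γ * D := by
            rw [hQstar s0 a]
            have hmul := mul_le_mul_of_nonneg_left hsum hγ0
            have hexp := mul_sub γ (∑ s', P s0 a s' * Vsel P R γ sel s')
              (∑ s', P s0 a s' * (⨆ a', Qstar s' a'))
            linarith
          linarith
      _ = γ * D := by rw [← Finset.sum_mul, (hsel s0).2, one_mul]
  have hD0 : D ≤ 0 := nonneg_of_le_gamma_mul γ hγ0 hγ1 key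
  have := hmax s
  linarith

lemma Vsel_greedy_eq [Nonempty A] (hP : IsKernel P) (hγ0 : 0 ≤ γ) (hγ1 : γ < 1)
    (Qstar : S → A → ℝ)
    (hQstar : ∀ s a, Qstar s a = R s a + γ * ∑ s', P s a s' * ⨆ a', Qstar s' a')
    {sel} (hsel : IsStochPolicy sel) (π : S → A)
    (hgre : ∀ s a, Qstar s a ≤ Qstar s (π s))
    (hdet : ∀ (s : S) (f : A → ℝ), ∑ a, sel s a * f a = f (π s)) :
    ∀ s, Vsel P R γ sel s = ⨆ a, Qstar s a := by
  intro s
  haveI : Nonempty S := ⟨s⟩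
  have hbdd : ∀ s' : S, BddAbove (Set.range (Qstar s')) :=
    fun s' => Set.Finite.bddAbove (Set.finite_range _)
  have hVst : ∀ s' : S, (⨆ a, Qstar s' a) = Qstar s' (π s') :=
    fun s' => le_antisymm (ciSup_le fun a => hgre s' a) (le_ciSup (hbdd s') (π s'))
  have hVpi : ∀ s' : S, Vsel P R γ sel s'
      = R s' (π s') + γ * ∑ s'', P s' (π s') s'' * Vsel P R γ sel s'' := by
    intro s'
    rw [Vsel_eq P R γ hP hγ0 hγ1 hsel s', hdet s']
  obtain ⟨s0, _, hs0⟩ := Finset.exists_max_image (Finset.univ : Finset S)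
    (fun s => |Vsel P R γ sel s - ⨆ a, Qstar s a|) ⟨s, Finset.mem_univ s⟩
  have hmax : ∀ s' : S, |Vsel P R γ sel s' - ⨆ a, Qstar s' a|
      ≤ |Vsel P R γ sel s0 - ⨆ a, Qstar s0 a| := fun s' => hs0 s' (Finset.mem_univ s')
  set M := |Vsel P R γ sel s0 - ⨆ a, Qstar s0 a| with hM
  have key : M ≤ γ * M := by
    have heq : Vsel P R γ sel s0 - (⨆ a, Qstar s0 a)
        = γ * ∑ s', P s0 (π s0) s' * (Vsel P R γ sel s' - ⨆ a', Qstar s' a') := by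
      rw [hVpi s0, hVst s0, hQstar s0 (π s0)]
      have hd : ∑ s', P s0 (π s0) s' * (Vsel P R γ sel s' - ⨆ a', Qstar s' a')
          = (∑ s', P s0 (π s0) s' * Vsel P R γ sel s')
            - ∑ s', P s0 (π s0) s' * ⨆ a', Qstar s' a' := by
        rw [← Finset.sum_sub_distrib]
        exact Finset.sum_congr rfl fun s' _ => by ring
      rw [hd, mul_sub]
      ring
    have e2 : M = γ * |∑ s', P s0 (π s0) s' * (Vsel P R γ sel s' - ⨆ a', Qstar s' a')| := by
      rw [hM, heq, abs_mul, abs_of_nonneg hγ0]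
    refine le_trans (le_of_eq e2) (mul_le_mul_of_nonneg_left ?_ hγ0)
    calc |∑ s', P s0 (π s0) s' * (Vsel P R γ sel s' - ⨆ a', Qstar s' a')|
        ≤ ∑ s', |P s0 (π s0) s' * (Vsel P R γ sel s' - ⨆ a', Qstar s' a')| :=
          Finset.abs_sum_le_sum_abs _ _
      _ ≤ ∑ s', P s0 (π s0) s' * M := by
          refine Finset.sum_le_sum fun s' _ => ?_
          rw [abs_mul, abs_of_nonneg ((hP s0 (π s0)).1 s')]
          exact mul_le_mul_of_nonneg_left (hmax s') ((hP s0 (π s0)).1 s')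
      _ = M := by rw [← Finset.sum_mul, (hP s0 (π s0)).2, one_mul]
  have hM0 : M ≤ 0 := nonneg_of_le_gamma_mul γ hγ0 hγ1 key
  have h := hmax s
  have := abs_nonneg (Vsel P R γ sel s - ⨆ a, Qstar s a)
  have : |Vsel P R γ sel s - ⨆ a, Qstar s a| = 0 := le_antisymm (le_trans h hM0) this
  have := abs_eq_zero.1 this
  linarith

def detPol [DecidableEq A] (π : S → A) : S → A → ℝ := fun s a => if a = π s then 1 else 0

lemma detPol_isStoch [DecidableEq A] (π : S → A) : IsStochPolicy (detPol (S := S) π) := by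
  intro s
  constructor
  · intro a; unfold detPol; split <;> norm_num
  · simp [detPol]

lemma detPol_sum [DecidableEq A] (π : S → A) (s : S) (f : A → ℝ) :
    ∑ a, detPol (S := S) π s a * f a = f (π s) := by
  unfold detPol
  simp [ite_mul, Finset.sum_ite_eq']

end Dev

/-- on a MAMDP `(M, PA)`, a Q-function and deterministic policy π satisfy
the Bellman optimality objective iff `Q = Q*_M` and π is an optimal policy of the
underlying MDP `M`; the solution is independent of `PA`. -/
theorem bellman_optimality_iff_mdp_optimal
    {S A : Type*} [Fintype S] [Fintype A] [Nonempty A] [DecidableEq A]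
    (P : S → A → S → ℝ) (R : S → A → ℝ) (γ : ℝ)
    (hP : IsKernel P) (hγ0 : 0 ≤ γ) (hγ1 : γ < 1)
    (PA : (S → A → ℝ) → S → A → ℝ)
    (hPA : ∀ π, IsStochPolicy π → IsStochPolicy (PA π))
    -- `Qstar` is the (unique) optimal action-value function of the underlying MDP `M`
    (Qstar : S → A → ℝ)
    (hQstar : ∀ s a, Qstar s a = R s a + γ * ∑ s', P s a s' * ⨆ a', Qstar s' a')
    (Q : S → A → ℝ) (π : S → A) :
    ((∀ s a, Q s a = R s a + γ * ∑ s', P s a s' * ⨆ a', Q s' a') ∧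
      (∀ s a, Q s a ≤ Q s (π s)))
    ↔ (Q = Qstar ∧
        ∀ init : S → ℝ, IsDist init → ∀ π' : S → A → ℝ, IsStochPolicy π' →
          expReturn P R γ π' init ≤
            expReturn P R γ (fun s a => if a = π s then 1 else 0) init) := by
  constructor
  · rintro ⟨hbell, hgreQ⟩
    have hQeq : Q = Qstar := bellman_unique P R γ hγ0 hγ1 hP Q Qstar hbell hQstar
    subst hQeq
    refine ⟨rfl, ?_⟩
    intro init hinit π' hπ'
    cases isEmpty_or_nonempty S with
    | inl h => simp [expReturn]
    | inr h =>
      have hdet := detPol_isStoch (S := S) π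
      have hVeq := Vsel_greedy_eq P R γ hP hγ0 hγ1 Q hQstar hdet π hgreQ
        (fun s f => detPol_sum π s f)
      rw [expReturn_linear P R γ hP hγ0 hγ1 hπ' init,
        expReturn_linear P R γ (sel := fun s a => if a = π s then 1 else 0)
          hP hγ0 hγ1 hdet init]
      refine Finset.sum_le_sum fun s0 _ => ?_
      refine mul_le_mul_of_nonneg_left ?_ (hinit.1 s0)
      have h1 : Vsel P R γ π' s0 ≤ ⨆ a, Q s0 a :=
        Vsel_le_Vstar P R γ hP hγ0 hγ1 Q hQstar hπ' s0
      have h2 := hVeq s0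
      exact le_trans h1 (le_of_eq h2.symm)
  · rintro ⟨hQeq, hopt⟩
    subst hQeq
    refine ⟨hQstar, ?_⟩
    intro s a
    haveI : Nonempty S := ⟨s⟩
    have hex : ∀ s' : S, ∃ a0 : A, ∀ a', Q s' a' ≤ Q s' a0 := by
      intro s'
      obtain ⟨a0, _, ha0⟩ := Finset.exists_max_image (Finset.univ : Finset A) (Q s')
        ⟨Classical.arbitrary A, Finset.mem_univ _⟩
      exact ⟨a0, fun a' => ha0 a' (Finset.mem_univ _)⟩
    choose g0 hg0 using hex
    have hVg0 := Vsel_greedy_eq P R γ hP hγ0 hγ1 Q hQstar (detPol_isStoch g0) g0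
      (fun s' a' => hg0 s' a') (fun s' f => detPol_sum g0 s' f)
    have hVpi_le : ∀ s' : S, Vsel P R γ (detPol π) s' ≤ ⨆ a', Q s' a' :=
      fun s' => Vsel_le_Vstar P R γ hP hγ0 hγ1 Q hQstar (detPol_isStoch π) s'
    have hVpi_ge : ∀ s' : S, (⨆ a', Q s' a') ≤ Vsel P R γ (detPol π) s' := by
      intro s'
      have h := hopt (dirac s') (dirac_isDist s') (detPol g0) (detPol_isStoch g0)
      rw [← hVg0 s']
      exact h
    have hVeq : ∀ s', Vsel P R γ (detPol π) s' = ⨆ a', Q s' a' :=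
      fun s' => le_antisymm (hVpi_le s') (hVpi_ge s')
    have hb := Vsel_eq P R γ hP hγ0 hγ1 (detPol_isStoch π) s
    rw [detPol_sum π s] at hb
    have hb2 : (⨆ a', Q s a') = R s (π s) + γ * ∑ s', P s (π s) s' * ⨆ a', Q s' a' := by
      rw [← hVeq s, hb]
      congr 1
      congr 1
      exact Finset.sum_congr rfl fun s' _ => by rw [hVeq s']
    have hsup : (⨆ a', Q s a') = Q s (π s) := by rw [hb2, ← hQstar s (π s)]
    have hle : Q s a ≤ ⨆ a', Q s a' :=
      le_ciSup (Set.Finite.bddAbove (Set.finite_range _)) a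
    rw [hsup] at hle
    exact hle
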